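/- Let G be a graph with a t-model T, let k be an integer, and let H be a k-reduced graph of G obtained via valid prunings from T. Let u be a vertex deleted from G (u ∉ V(H)) and v ∈ V(H) its parent in T. Then exactly k children of v in T that belong to H have end type equal to the end type of u. -/

import Mathlib

/-! ### First-order logic on graphs -/

/-- First-order formulas in the language of graphs (equality and one binary
adjacency relation), with free variables among `Fin n`. -/
inductive GraphFormula : ℕ → Type where
  | eq : ∀ {n : ℕ}, Fin n → Fin n → GraphFormula n
  | adj : ∀ {n : ℕ}, Fin n → Fin n → GraphFormula n
  | not : ∀ {n : ℕ}, GraphFormula n → GraphFormula n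
  | and : ∀ {n : ℕ}, GraphFormula n → GraphFormula n → GraphFormula n
  | or : ∀ {n : ℕ}, GraphFormula n → GraphFormula n → GraphFormula n
  | all : ∀ {n : ℕ}, GraphFormula (n + 1) → GraphFormula n
  | ex : ∀ {n : ℕ}, GraphFormula (n + 1) → GraphFormula n

namespace GraphFormula

/-- Quantifier depth of a formula: the maximum number of nested quantifiers. -/
def qdepth : ∀ {n : ℕ}, GraphFormula n → ℕ
  | _, .eq _ _ => 0
  | _, .adj _ _ => 0
  | _, .not f => qdepth f
  | _, .and f g => max (qdepth f) (qdepth g)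
  | _, .or f g => max (qdepth f) (qdepth g)
  | _, .all f => qdepth f + 1
  | _, .ex f => qdepth f + 1

/-- Satisfaction of a formula in a simple graph, under an assignment of the
free variables. -/
def Sat {V : Type*} (G : SimpleGraph V) : ∀ {n : ℕ}, GraphFormula n → (Fin n → V) → Prop
  | _, .eq i j, a => a i = a j
  | _, .adj i j, a => G.Adj (a i) (a j)
  | _, .not f, a => ¬ Sat G f a
  | _, .and f g, a => Sat G f a ∧ Sat G g a
  | _, .or f g, a => Sat G f a ∨ Sat G g a
  | _, .all f, a => ∀ v, Sat G f (Fin.snoc a v)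
  | _, .ex f, a => ∃ v, Sat G f (Fin.snoc a v)

/-- Existential closure: prefix a formula with one existential quantifier for
each of its free variables. -/
def exClosure : ∀ {n : ℕ}, GraphFormula n → GraphFormula 0
  | 0, f => f
  | _ + 1, f => exClosure (GraphFormula.ex f)

end GraphFormula

/-- A graph satisfies a sentence (formula with no free variables). -/
def SatSentence {V : Type*} (G : SimpleGraph V) (φ : GraphFormula 0) : Prop :=
  GraphFormula.Sat G φ Fin.elim0

/-! ### Local certification -/

/-- A valid identifier assignment: pairwise distinct identifiers in `[1, n ^ c]`. -/
def ValidIds (c : ℕ) {n : ℕ} (ids : Fin n → ℕ) : Prop :=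
  Function.Injective ids ∧ ∀ v, 1 ≤ ids v ∧ ids v ≤ n ^ c

/-- The part of the local view of a vertex `v` consisting of the
(identifier, certificate) pairs of its neighbors. -/
def neighborsView {n : ℕ} (G : SimpleGraph (Fin n)) (ids : Fin n → ℕ)
    (cert : Fin n → List Bool) (v : Fin n) : Set (ℕ × List Bool) :=
  {p | ∃ u, G.Adj v u ∧ p = (ids u, cert u)}

/-- The part of the local view of a vertex `v`, in the presence of inputs
(labels), consisting of the (identifier, label, certificate) triples of its
neighbors. -/
def labeledNeighborsView {n : ℕ} {L : Type*} (G : SimpleGraph (Fin n)) (ids : Fin n → ℕ)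
    (lab : Fin n → L) (cert : Fin n → List Bool) (v : Fin n) :
    Set (ℕ × L × List Bool) :=
  {p | ∃ u, G.Adj v u ∧ p = (ids u, lab u, cert u)}

/-! ### Rooted trees, elimination trees and treedepth -/

/-- A rooted tree on the vertex set `V`, given by its root and parent
function: every vertex reaches the root by iterating the parent map. -/
structure ElimTree (V : Type*) where
  root : V
  parent : V → V
  parent_root : parent root = root
  reaches_root : ∀ v, ∃ j : ℕ, parent^[j] v = root

namespace ElimTree

variable {V : Type*}

/-- The depth of a vertex in a rooted tree (the root has depth 0). -/
noncomputable def depth (T : ElimTree V) (v : V) : ℕ :=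
  sInf {j : ℕ | T.parent^[j] v = T.root}

/-- `u` is an ancestor of `v` (possibly `u = v`). -/
def IsAncestor (T : ElimTree V) (u v : V) : Prop :=
  ∃ j : ℕ, T.parent^[j] v = u

/-- The set of vertices of `S` in the subtree rooted at `v`. -/
def subtree (T : ElimTree V) (S : Set V) (v : V) : Set V :=
  {x ∈ S | T.IsAncestor v x}

end ElimTree

/-- `T` is a `t`-model (elimination tree of depth at most `t`) of `G`:
every vertex has depth at most `t` and every edge of `G` joins a vertex to
one of its ancestors. -/
def IsModelOfDepth {V : Type*} (T : ElimTree V) (G : SimpleGraph V) (t : ℕ) : Prop :=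
  (∀ v, T.depth v ≤ t) ∧ ∀ u v, G.Adj u v → T.IsAncestor u v ∨ T.IsAncestor v u

/-- The graph `G` has treedepth at most `t`. -/
def TreedepthLE {V : Type*} (G : SimpleGraph V) (t : ℕ) : Prop :=
  ∃ T : ElimTree V, IsModelOfDepth T G t

/-- A model `T` of `G` is coherent if for every non-root vertex `w` (i.e.
every child `w` of a vertex of `T`), some vertex of the subtree rooted at `w`
is adjacent in `G` to the parent of `w`. -/
def Coherent {V : Type*} (T : ElimTree V) (G : SimpleGraph V) : Prop :=
  ∀ w, w ≠ T.root → ∃ x, T.IsAncestor w x ∧ G.Adj x (T.parent w)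

/-! ### Types, prunings and k-reduced graphs -/

/-- The type of `v` in the induced structure on `S₁` equals the type of `w`
in the induced structure on `S₂`: there is a bijection between the subtrees
rooted at `v` and `w` preserving the tree structure, the depths, and the
ancestor vectors (adjacency in `G` to the ancestors). -/
def SameTypeIn {V : Type*} (G : SimpleGraph V) (T : ElimTree V)
    (S₁ S₂ : Set V) (v w : V) : Prop :=
  ∃ f : V → V,
    Set.BijOn f (T.subtree S₁ v) (T.subtree S₂ w) ∧
    f v = w ∧
    (∀ x ∈ T.subtree S₁ v, x ≠ v → f (T.parent x) = T.parent (f x)) ∧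
    (∀ x ∈ T.subtree S₁ v, T.depth (f x) = T.depth x ∧
      ∀ m : ℕ, G.Adj x (T.parent^[m] x) ↔ G.Adj (f x) (T.parent^[m] (f x)))

/-- Two vertices of `S` have the same type. -/
def SameType {V : Type*} (G : SimpleGraph V) (T : ElimTree V) (S : Set V) (v w : V) : Prop :=
  SameTypeIn G T S S v w

/-- A valid pruning operation on the current vertex set `S`: `u` is a vertex
whose parent has more than `k` children (in `S`) of the same type as `u`, and
the whole subtree rooted at `u` is removed, yielding `S'`. -/
def PruneStep {V : Type*} (G : SimpleGraph V) (T : ElimTree V) (k : ℕ)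
    (S : Set V) (u : V) (S' : Set V) : Prop :=
  u ∈ S ∧ u ≠ T.root ∧
  (∃ C : Set V, C ⊆ S ∧ u ∈ C ∧ C.Finite ∧ k + 1 ≤ C.ncard ∧
    (∀ w ∈ C, T.parent w = T.parent u ∧ w ≠ T.parent u) ∧
    (∀ w ∈ C, SameType G T S u w)) ∧
  S' = S \ {x | T.IsAncestor u x}

/-- A valid pruning operation performed at a vertex of the largest possible
depth among all currently possible pruning operations. -/
def MaxPruneStep {V : Type*} (G : SimpleGraph V) (T : ElimTree V) (k : ℕ)
    (S : Set V) (u : V) (S' : Set V) : Prop :=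
  PruneStep G T k S u S' ∧
    ∀ u' S'', PruneStep G T k S u' S'' → T.depth u' ≤ T.depth u

/-- A complete pruning process producing a `k`-reduced graph of `G` from the
model `T`: starting from all of `G`, valid pruning operations are applied,
always at a vertex of largest possible depth, until none applies. -/
structure PruningProcess {V : Type*} (G : SimpleGraph V) (T : ElimTree V) (k : ℕ) where
  len : ℕ
  sets : ℕ → Set V
  prunedAt : ℕ → V
  init : sets 0 = Set.univ
  step : ∀ i < len, MaxPruneStep G T k (sets i) (prunedAt i) (sets (i + 1))
  halt : ∀ u S', ¬ PruneStep G T k (sets len) u S'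

namespace PruningProcess

variable {V : Type*} {G : SimpleGraph V} {T : ElimTree V} {k : ℕ}

/-- The vertex set of the resulting `k`-reduced graph. -/
def result (P : PruningProcess G T k) : Set V := P.sets P.len

/-- The index of the step at which a vertex was deleted (the current set at
that moment still contains the vertex); for surviving vertices this is the
final index. -/
noncomputable def lastIdx (P : PruningProcess G T k) (v : V) : ℕ :=
  sInf {i : ℕ | i = P.len ∨ v ∉ P.sets (i + 1)}

/-- The vertex set that was current when `v` was deleted (for a deleted
vertex), or the final vertex set (for a surviving vertex). -/
noncomputable def currentSet (P : PruningProcess G T k) (v : V) : Set V :=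
  P.sets (P.lastIdx v)

/-- `v` and `w` have the same end type: the end type of a deleted vertex is
its type in the graph current when it was deleted, and the end type of a
surviving vertex is its type in the resulting graph. -/
def EndTypeEq (P : PruningProcess G T k) (v w : V) : Prop :=
  SameTypeIn G T (P.currentSet v) (P.currentSet w) v w

end PruningProcess

/-! ### Auxiliary lemmas: elimination trees -/

namespace ElimTree

variable {V : Type*} {T : ElimTree V}

lemma iterate_root (T : ElimTree V) (j : ℕ) : T.parent^[j] T.root = T.root := by
  induction j with
  | zero => rfl
  | succ n ih => rw [Function.iterate_succ_apply', ih, T.parent_root]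

lemma depth_spec (T : ElimTree V) (v : V) : T.parent^[T.depth v] v = T.root :=
  Nat.sInf_mem (T.reaches_root v)

lemma depth_le {v : V} {j : ℕ} (h : T.parent^[j] v = T.root) : T.depth v ≤ j :=
  Nat.sInf_le h

lemma eq_root_of_depth_eq_zero {v : V} (h : T.depth v = 0) : v = T.root := by
  have h2 := T.depth_spec v
  rwa [h, Function.iterate_zero_apply] at h2

lemma depth_add_le {p y : V} {a : ℕ} (hp : p ≠ T.root) (h : T.parent^[a] y = p) :
    T.depth p + a ≤ T.depth y := by
  have ha : a ≤ T.depth y := by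
    by_contra hlt
    push_neg at hlt
    apply hp
    rw [← h, show a = (a - T.depth y) + T.depth y by omega, Function.iterate_add_apply,
      T.depth_spec, iterate_root]
  have h2 : T.parent^[T.depth y - a] p = T.root := by
    rw [← h, ← Function.iterate_add_apply, show T.depth y - a + a = T.depth y by omega]
    exact T.depth_spec y
  have h3 := depth_le h2
  omega

lemma isAncestor_refl (T : ElimTree V) (v : V) : T.IsAncestor v v := ⟨0, rfl⟩

lemma isAncestor_trans {p x y : V} (h1 : T.IsAncestor p x) (h2 : T.IsAncestor x y) :
    T.IsAncestor p y := by
  obtain ⟨a, ha⟩ := h1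
  obtain ⟨b, hb⟩ := h2
  exact ⟨a + b, by rw [Function.iterate_add_apply, hb, ha]⟩

lemma depth_lt_of_strict_anc {p y : V} (hp : p ≠ T.root) (hanc : T.IsAncestor p y)
    (hne : p ≠ y) : T.depth p < T.depth y := by
  obtain ⟨a, ha⟩ := hanc
  have ha0 : a ≠ 0 := by rintro rfl; exact hne ha.symm
  have := depth_add_le hp ha
  omega

lemma depth_eq_parent_add_one {v : V} (hv : v ≠ T.root) :
    T.depth v = T.depth (T.parent v) + 1 := by
  have h1 : 1 ≤ T.depth v := by
    rcases Nat.eq_zero_or_pos (T.depth v) with h | h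
    · exact absurd (eq_root_of_depth_eq_zero h) hv
    · exact h
  have h2 : T.parent^[T.depth v - 1] (T.parent v) = T.root := by
    have h := T.depth_spec v
    rw [show T.depth v = (T.depth v - 1) + 1 by omega, Function.iterate_succ_apply] at h
    exact h
  have h3 := depth_le h2
  have h4 : T.parent^[T.depth (T.parent v) + 1] v = T.root := by
    rw [Function.iterate_succ_apply]
    exact T.depth_spec (T.parent v)
  have h5 := depth_le h4
  omega

lemma ne_root_of_parent_ne {v : V} (h : T.parent v ≠ v) : v ≠ T.root := by
  rintro rfl; exact h T.parent_root

lemma comparable_of_common {x p y : V} (hx : T.IsAncestor x y) (hp : T.IsAncestor p y) :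
    T.IsAncestor x p ∨ T.IsAncestor p x := by
  obtain ⟨a, ha⟩ := hx
  obtain ⟨b, hb⟩ := hp
  rcases le_total a b with h | h
  · right
    exact ⟨b - a, by rw [← ha, ← Function.iterate_add_apply,
      show b - a + a = b by omega, hb]⟩
  · left
    exact ⟨a - b, by rw [← hb, ← Function.iterate_add_apply,
      show a - b + b = a by omega, ha]⟩

lemma isAncestor_parent_of_ne {p u : V} (h : T.IsAncestor p u) (hne : p ≠ u) :
    T.IsAncestor p (T.parent u) := by
  obtain ⟨a, ha⟩ := h
  have ha0 : a ≠ 0 := by rintro rfl; exact hne ha.symm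
  refine ⟨a - 1, ?_⟩
  rw [show a = (a - 1) + 1 by omega, Function.iterate_succ_apply] at ha
  exact ha

lemma mem_subtree {S : Set V} {v x : V} :
    x ∈ T.subtree S v ↔ x ∈ S ∧ T.IsAncestor v x := Iff.rfl

lemma self_mem_subtree {S : Set V} {v : V} (hv : v ∈ S) : v ∈ T.subtree S v :=
  ⟨hv, T.isAncestor_refl v⟩

/-- A set closed under taking parents. -/
def PClosed (T : ElimTree V) (S : Set V) : Prop := ∀ x ∈ S, T.parent x ∈ S

lemma parent_mem_subtree {S : Set V} {v x : V} (hcl : T.PClosed S)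
    (hx : x ∈ T.subtree S v) (hne : x ≠ v) : T.parent x ∈ T.subtree S v :=
  ⟨hcl x hx.1, isAncestor_parent_of_ne hx.2 (by rintro rfl; exact hne rfl)⟩

lemma subtree_diff_eq {S : Set V} {p w : V} (hw : ¬ T.IsAncestor p w)
    (hwp : ¬ T.IsAncestor w p) :
    T.subtree (S \ {x | T.IsAncestor p x}) w = T.subtree S w := by
  ext y
  constructor
  · rintro ⟨⟨hyS, _⟩, hanc⟩
    exact ⟨hyS, hanc⟩
  · rintro ⟨hyS, hanc⟩
    refine ⟨⟨hyS, fun hpy => ?_⟩, hanc⟩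
    rcases comparable_of_common hanc hpy with h | h
    · exact hwp h
    · exact hw h

end ElimTree

/-! ### Auxiliary lemmas: `SameTypeIn` -/

section SameTypeInLemmas

open ElimTree

variable {V : Type*} {G : SimpleGraph V} {T : ElimTree V} {S S₁ S₂ S₃ : Set V} {v w x : V}

lemma sameTypeIn_congr (h1 : T.subtree S₁ v = T.subtree S₁' v)
    (h2 : T.subtree S₂ w = T.subtree S₂' w) :
    SameTypeIn G T S₁ S₂ v w ↔ SameTypeIn G T S₁' S₂' v w := by
  unfold SameTypeIn
  rw [h1, h2]

lemma sameTypeIn_refl (hv : v ∈ S) : SameTypeIn G T S S v v :=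
  ⟨id, Set.bijOn_id _, rfl, fun _ _ _ => rfl, fun x _ => ⟨rfl, fun _ => Iff.rfl⟩⟩

lemma sameTypeIn_symm (hv : v ∈ S₁) (hcl : T.PClosed S₁)
    (h : SameTypeIn G T S₁ S₂ v w) : SameTypeIn G T S₂ S₁ w v := by
  have : Nonempty V := ⟨v⟩
  obtain ⟨f, hbij, hfv, hpar, hda⟩ := h
  set g := Function.invFunOn f (T.subtree S₁ v) with hg
  have hinv : Set.InvOn g f (T.subtree S₁ v) (T.subtree S₂ w) := hbij.invOn_invFunOn
  have hbijg : Set.BijOn g (T.subtree S₂ w) (T.subtree S₁ v) := hbij.symm hinv.symm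
  have hvmem : v ∈ T.subtree S₁ v := self_mem_subtree hv
  have hgw : g w = v := by rw [← hfv]; exact hinv.1 hvmem
  refine ⟨g, hbijg, hgw, ?_, ?_⟩
  · intro y hy hyw
    have hxy : g y ∈ T.subtree S₁ v := hbijg.mapsTo hy
    have hfgy : f (g y) = y := hinv.2 hy
    have hgyv : g y ≠ v := by
      rintro hh
      rw [hh, hfv] at hfgy
      exact hyw hfgy.symm
    have h1 : f (T.parent (g y)) = T.parent y := by
      rw [hpar (g y) hxy hgyv, hfgy]
    have h2 : T.parent (g y) ∈ T.subtree S₁ v := parent_mem_subtree hcl hxy hgyv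
    calc g (T.parent y) = g (f (T.parent (g y))) := by rw [h1]
      _ = T.parent (g y) := hinv.1 h2
  · intro y hy
    have hxy : g y ∈ T.subtree S₁ v := hbijg.mapsTo hy
    have hfgy : f (g y) = y := hinv.2 hy
    obtain ⟨hd, hadj⟩ := hda (g y) hxy
    rw [hfgy] at hd hadj
    exact ⟨hd.symm, fun m => (hadj m).symm⟩

lemma sameTypeIn_trans (hv : v ∈ S₁)
    (h1 : SameTypeIn G T S₁ S₂ v w) (h2 : SameTypeIn G T S₂ S₃ w x) :
    SameTypeIn G T S₁ S₃ v x := by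
  obtain ⟨f₁, hbij₁, hf₁, hpar₁, hda₁⟩ := h1
  obtain ⟨f₂, hbij₂, hf₂, hpar₂, hda₂⟩ := h2
  have hvmem : v ∈ T.subtree S₁ v := self_mem_subtree hv
  refine ⟨f₂ ∘ f₁, hbij₂.comp hbij₁, by simp [hf₁, hf₂], ?_, ?_⟩
  · intro y hy hyv
    have hmem : f₁ y ∈ T.subtree S₂ w := hbij₁.mapsTo hy
    have hne : f₁ y ≠ w := by
      rintro hh
      exact hyv (hbij₁.injOn hy hvmem (by rw [hh, hf₁]))
    simp only [Function.comp_apply]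
    rw [hpar₁ y hy hyv, hpar₂ (f₁ y) hmem hne]
  · intro y hy
    have hmem : f₁ y ∈ T.subtree S₂ w := hbij₁.mapsTo hy
    obtain ⟨hd₁, ha₁⟩ := hda₁ y hy
    obtain ⟨hd₂, ha₂⟩ := hda₂ (f₁ y) hmem
    exact ⟨by simpa [hd₂] using hd₁, fun m => (ha₁ m).trans (ha₂ m)⟩

end SameTypeInLemmas

/-! ### Auxiliary lemmas: pruning processes -/

namespace PruningProcess

open ElimTree

variable {V : Type*} {G : SimpleGraph V} {T : ElimTree V} {k : ℕ} (P : PruningProcess G T k)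

lemma sets_eq {i : ℕ} (hi : i < P.len) :
    P.sets (i + 1) = P.sets i \ {x | T.IsAncestor (P.prunedAt i) x} :=
  (P.step i hi).1.2.2.2

lemma sets_succ_subset {i : ℕ} (hi : i < P.len) : P.sets (i + 1) ⊆ P.sets i := by
  rw [P.sets_eq hi]; exact Set.diff_subset

lemma sets_subset {i j : ℕ} (hij : i ≤ j) (hj : j ≤ P.len) : P.sets j ⊆ P.sets i := by
  induction j with
  | zero =>
    have : i = 0 := by omega
    subst this; exact subset_rfl
  | succ n ih =>
    rcases Nat.lt_or_ge i (n + 1) with h | h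
    · exact (P.sets_succ_subset (by omega)).trans (ih (by omega) (by omega))
    · have : i = n + 1 := by omega
      subst this; exact subset_rfl

lemma pclosed_sets {i : ℕ} (hi : i ≤ P.len) : T.PClosed (P.sets i) := by
  induction i with
  | zero => rw [P.init]; intro x _; exact Set.mem_univ _
  | succ n ih =>
    rw [P.sets_eq (by omega)]
    rintro x ⟨hx1, hx2⟩
    refine ⟨ih (by omega) x hx1, fun hanc => hx2 ?_⟩
    exact isAncestor_trans hanc ⟨1, rfl⟩

lemma lastIdx_nonempty (v : V) : {i : ℕ | i = P.len ∨ v ∉ P.sets (i + 1)}.Nonempty :=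
  ⟨P.len, Or.inl rfl⟩

lemma lastIdx_le_len (v : V) : P.lastIdx v ≤ P.len := Nat.sInf_le (Or.inl rfl)

lemma mem_sets_of_le_lastIdx {v : V} {i : ℕ} (hi : i ≤ P.lastIdx v) : v ∈ P.sets i := by
  induction i with
  | zero => rw [P.init]; exact Set.mem_univ _
  | succ n ih =>
    by_contra h
    have : P.lastIdx v ≤ n := Nat.sInf_le (Or.inr h)
    omega

lemma lastIdx_eq_len_of_mem_result {w : V} (hw : w ∈ P.result) : P.lastIdx w = P.len := by
  have h1 := P.lastIdx_le_len w
  have hmem : P.lastIdx w = P.len ∨ w ∉ P.sets (P.lastIdx w + 1) :=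
    Nat.sInf_mem (P.lastIdx_nonempty w)
  rcases hmem with h | h
  · exact h
  · by_contra hne
    exact h (P.sets_subset (by omega) le_rfl hw)

lemma lastIdx_lt_len {u : V} (hu : u ∉ P.result) : P.lastIdx u < P.len := by
  rcases Nat.lt_or_ge (P.lastIdx u) P.len with h | h
  · exact h
  · exact absurd (P.mem_sets_of_le_lastIdx (v := u) (i := P.len) h) hu

lemma not_mem_succ_lastIdx {u : V} (hu : u ∉ P.result) : u ∉ P.sets (P.lastIdx u + 1) := by
  have hmem : P.lastIdx u = P.len ∨ u ∉ P.sets (P.lastIdx u + 1) :=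
    Nat.sInf_mem (P.lastIdx_nonempty u)
  rcases hmem with h | h
  · exfalso
    have := P.lastIdx_lt_len hu
    omega
  · exact h

end PruningProcess

/-- Let `G` be a graph with a `t`-model `T`, `k` an integer, and `H` a
`k`-reduced graph of `G` obtained via valid prunings from `T`. If `u` is a deleted
vertex whose parent `v` in `T` belongs to `H`, then exactly `k` children of `v` in `T`
belonging to `H` have end type equal to the end type of `u`. -/
theorem kreduced_deleted_children_count {V : Type} [Fintype V] (G : SimpleGraph V)
    (t k : ℕ) (T : ElimTree V) (hT : IsModelOfDepth T G t)
    (P : PruningProcess G T k) (u v : V)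
    (hu : u ∉ P.result) (hv : v ∈ P.result)
    (hparent : T.parent u = v) (hne : u ≠ v) :
    {w | T.parent w = v ∧ w ≠ v ∧ w ∈ P.result ∧ P.EndTypeEq w u}.ncard = k := by
  classical
  open ElimTree in
  -- basic notation
  set i₀ := P.lastIdx u with hi₀
  have hi₀len : i₀ < P.len := P.lastIdx_lt_len hu
  have humem : u ∈ P.sets i₀ := P.mem_sets_of_le_lastIdx le_rfl
  have hunot : u ∉ P.sets (i₀ + 1) := P.not_mem_succ_lastIdx hu
  have hvsets : ∀ j ≤ P.len, v ∈ P.sets j := fun j hj => P.sets_subset hj le_rfl hv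
  have huroot : u ≠ T.root := ElimTree.ne_root_of_parent_ne (by rw [hparent]; exact fun h => hne h.symm)
  have hdu : T.depth u = T.depth v + 1 := by
    rw [ElimTree.depth_eq_parent_add_one huroot, hparent]
  -- depth of any child of v
  have hchild_depth : ∀ w : V, T.parent w = v → w ≠ v → T.depth w = T.depth u := by
    intro w hw hwv
    have hwroot : w ≠ T.root := ElimTree.ne_root_of_parent_ne (by rw [hw]; exact fun h => hwv h.symm)
    rw [ElimTree.depth_eq_parent_add_one hwroot, hw, hdu]
  -- the pruned vertex at step i₀ is u itself
  have heq₀ : P.sets (i₀ + 1) = P.sets i₀ \ {x | T.IsAncestor (P.prunedAt i₀) x} :=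
    P.sets_eq hi₀len
  have hanc₀ : T.IsAncestor (P.prunedAt i₀) u := by
    by_contra h
    exact hunot (heq₀ ▸ ⟨humem, h⟩)
  have hp₀ : P.prunedAt i₀ = u := by
    by_contra h
    have h1 : T.IsAncestor (P.prunedAt i₀) v := by
      rw [← hparent]
      exact ElimTree.isAncestor_parent_of_ne hanc₀ h
    have h2 : v ∈ P.sets (i₀ + 1) := hvsets _ (by omega)
    rw [heq₀] at h2
    exact h2.2 h1
  -- no pruned vertex (at any step) is a strict ancestor of a child of v that is still present
  -- L1': any pruning available after step j happens at depth ≤ depth of step j's pruning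
  have hL1' : ∀ j < P.len, ∀ q S'', PruneStep G T k (P.sets (j + 1)) q S'' →
      T.depth q ≤ T.depth (P.prunedAt j) := by
    intro j hj q S'' hq
    by_contra hgt
    push_neg at hgt
    have heq : P.sets (j + 1) = P.sets j \ {x | T.IsAncestor (P.prunedAt j) x} := P.sets_eq hj
    obtain ⟨hqS', hqroot, ⟨C, hCsub, hqC, hCfin, hCcard, hCpar, hCtype⟩, _⟩ := hq
    -- all members of C have the same depth as q
    have hdC : ∀ w ∈ C, T.depth w = T.depth q := by
      intro w hw
      have h1 := hCpar w hw
      have hwroot : w ≠ T.root :=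
        ElimTree.ne_root_of_parent_ne (by rw [h1.1]; exact fun h => h1.2 h.symm)
      have h2 := hCpar q hqC
      have hqroot' : q ≠ T.root := hqroot
      rw [ElimTree.depth_eq_parent_add_one hwroot, h1.1,
        ElimTree.depth_eq_parent_add_one hqroot']
    -- subtrees of members of C are unaffected by step j
    have hsub : ∀ w ∈ C, T.subtree (P.sets (j + 1)) w = T.subtree (P.sets j) w := by
      intro w hw
      have hwS' : w ∈ P.sets (j + 1) := hCsub hw
      have hwnot : ¬ T.IsAncestor (P.prunedAt j) w := by
        rw [heq] at hwS'
        exact hwS'.2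
      have hwroot : w ≠ T.root := by
        have h1 := hCpar w hw
        exact ElimTree.ne_root_of_parent_ne (by rw [h1.1]; exact fun h => h1.2 h.symm)
      have hwnot2 : ¬ T.IsAncestor w (P.prunedAt j) := by
        intro hanc
        rcases eq_or_ne w (P.prunedAt j) with h | h
        · exact hwnot (h ▸ T.isAncestor_refl w)
        · have := ElimTree.depth_lt_of_strict_anc hwroot hanc h
          have := hdC w hw
          omega
      rw [heq]
      exact ElimTree.subtree_diff_eq hwnot hwnot2
    -- the pruning of q was already available at step j, contradicting maximality
    have hprune : PruneStep G T k (P.sets j) q (P.sets j \ {x | T.IsAncestor q x}) := by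
      refine ⟨P.sets_succ_subset hj hqS', hqroot,
        ⟨C, hCsub.trans (P.sets_succ_subset hj), hqC, hCfin, hCcard, hCpar, ?_⟩, rfl⟩
      intro w hw
      exact (sameTypeIn_congr (hsub q hqC) (hsub w hw)).mp (hCtype w hw)
    have := (P.step j hj).2 q _ hprune
    omega
  -- depths of pruned vertices are ≤ depth u from step i₀ on
  have hdep : ∀ j, i₀ ≤ j → j < P.len → T.depth (P.prunedAt j) ≤ T.depth u := by
    intro j hj
    induction j, hj using Nat.le_induction with
    | base => intro _; rw [hp₀]
    | succ n hn ih =>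
      intro hlen
      have h1 := hL1' n (by omega) (P.prunedAt (n + 1)) _ (P.step (n + 1) hlen).1
      exact h1.trans (ih (by omega))
  -- the evolving family of same-type siblings
  set A : ℕ → Set V := fun j => {w | w ∈ P.sets j ∧ T.parent w = v ∧ w ≠ v ∧
    SameTypeIn G T (P.sets j) (P.sets i₀) w u} with hA
  have hmemA : ∀ j w, w ∈ A j ↔ (w ∈ P.sets j ∧ T.parent w = v ∧ w ≠ v ∧
      SameTypeIn G T (P.sets j) (P.sets i₀) w u) := by
    intro j w; exact Iff.rfl
  -- the step property
  have hAstep : ∀ j, i₀ ≤ j → j < P.len →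
      (A j \ {P.prunedAt j} ⊆ A (j + 1)) ∧ (P.prunedAt j ∈ A j → k + 1 ≤ (A j).ncard) := by
    intro j hj hjlen
    have heq : P.sets (j + 1) = P.sets j \ {x | T.IsAncestor (P.prunedAt j) x} := P.sets_eq hjlen
    have hdp : T.depth (P.prunedAt j) ≤ T.depth u := hdep j hj hjlen
    constructor
    · rintro w ⟨hwA, hwp⟩
      rw [Set.mem_singleton_iff] at hwp
      obtain ⟨hwS, hwpar, hwv, hwtype⟩ := (hmemA j w).mp hwA
      have hwanc : ¬ T.IsAncestor (P.prunedAt j) w := by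
        intro hanc
        have h1 : T.IsAncestor (P.prunedAt j) v := by
          rw [← hwpar]
          exact ElimTree.isAncestor_parent_of_ne hanc (fun h => hwp h.symm)
        have h2 : v ∈ P.sets (j + 1) := hvsets _ (by omega)
        rw [heq] at h2
        exact h2.2 h1
      have hwroot : w ≠ T.root :=
        ElimTree.ne_root_of_parent_ne (by rw [hwpar]; exact fun h => hwv h.symm)
      have hwnot2 : ¬ T.IsAncestor w (P.prunedAt j) := by
        intro hanc
        rcases eq_or_ne w (P.prunedAt j) with h | h
        · exact hwp h
        · have := ElimTree.depth_lt_of_strict_anc hwroot hanc h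
          have := hchild_depth w hwpar hwv
          omega
      have hsubeq : T.subtree (P.sets (j + 1)) w = T.subtree (P.sets j) w := by
        rw [heq]
        exact ElimTree.subtree_diff_eq hwanc hwnot2
      refine (hmemA _ w).mpr ⟨?_, hwpar, hwv, ?_⟩
      · rw [heq]; exact ⟨hwS, hwanc⟩
      · exact (sameTypeIn_congr hsubeq rfl).mpr hwtype
    · intro hpA
      obtain ⟨hpS, hppar, hpv, hptype⟩ := (hmemA j _).mp hpA
      obtain ⟨_, _, ⟨C, hCsub, hpC, hCfin, hCcard, hCpar, hCtype⟩, _⟩ := (P.step j hjlen).1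
      have hCA : C ⊆ A j := by
        intro w hw
        refine (hmemA j w).mpr ⟨hCsub hw, ?_, ?_, ?_⟩
        · rw [(hCpar w hw).1, hppar]
        · rw [← hppar]; exact (hCpar w hw).2
        · exact sameTypeIn_trans (hCsub hw)
            (sameTypeIn_symm hpS (P.pclosed_sets (by omega)) (hCtype w hw)) hptype
      calc k + 1 ≤ C.ncard := hCcard
        _ ≤ (A j).ncard := Set.ncard_le_ncard hCA (Set.toFinite _)
  -- u itself belongs to A i₀
  have huA : u ∈ A i₀ := (hmemA i₀ u).mpr ⟨humem, hparent, hne, sameTypeIn_refl humem⟩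
  -- invariant: from step i₀ + 1 on, at least k members
  have hInv : ∀ j, i₀ + 1 ≤ j → j ≤ P.len → k ≤ (A j).ncard := by
    intro j hj
    induction j, hj using Nat.le_induction with
    | base =>
      intro _
      have h1 := hAstep i₀ le_rfl hi₀len
      have h2 : k + 1 ≤ (A i₀).ncard := h1.2 (hp₀ ▸ huA)
      have h3 : (A i₀ \ {P.prunedAt i₀}).ncard = (A i₀).ncard - 1 :=
        Set.ncard_diff_singleton_of_mem (hp₀ ▸ huA)
      have h4 : (A i₀ \ {P.prunedAt i₀}).ncard ≤ (A (i₀ + 1)).ncard :=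
        Set.ncard_le_ncard h1.1 (Set.toFinite _)
      omega
    | succ n hn ih =>
      intro hlen
      have hik : k ≤ (A n).ncard := ih (by omega)
      have h1 := hAstep n (by omega) (by omega)
      by_cases hp : P.prunedAt n ∈ A n
      · have h2 : k + 1 ≤ (A n).ncard := h1.2 hp
        have h3 : (A n \ {P.prunedAt n}).ncard = (A n).ncard - 1 :=
          Set.ncard_diff_singleton_of_mem hp
        have h4 : (A n \ {P.prunedAt n}).ncard ≤ (A (n + 1)).ncard :=
          Set.ncard_le_ncard h1.1 (Set.toFinite _)
        omega
      · have h2 : A n ⊆ A (n + 1) := by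
          intro w hw
          exact h1.1 ⟨hw, by simp; rintro rfl; exact hp hw⟩
        exact hik.trans (Set.ncard_le_ncard h2 (Set.toFinite _))
  have hlower : k ≤ (A P.len).ncard := hInv P.len (by omega) le_rfl
  -- upper bound via the halting condition
  have hupper : (A P.len).ncard ≤ k := by
    by_contra h
    push_neg at h
    have hcard : k + 1 ≤ (A P.len).ncard := h
    have hne0 : (A P.len).Nonempty := by
      rw [← Set.ncard_pos (Set.toFinite _)]
      omega
    obtain ⟨w₀, hw₀⟩ := hne0
    obtain ⟨hw₀S, hw₀par, hw₀v, hw₀type⟩ := (hmemA _ w₀).mp hw₀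
    have hw₀root : w₀ ≠ T.root :=
      ElimTree.ne_root_of_parent_ne (by rw [hw₀par]; exact fun h => hw₀v h.symm)
    apply P.halt w₀ (P.sets P.len \ {x | T.IsAncestor w₀ x})
    refine ⟨hw₀S, hw₀root, ⟨A P.len, ?_, hw₀, Set.toFinite _, hcard, ?_, ?_⟩, rfl⟩
    · intro w hw
      exact ((hmemA _ w).mp hw).1
    · intro w hw
      obtain ⟨hwS, hwpar, hwv, _⟩ := (hmemA _ w).mp hw
      rw [hw₀par]
      exact ⟨hwpar, hwv⟩
    · intro w hw
      obtain ⟨hwS, hwpar, hwv, hwtype⟩ := (hmemA _ w).mp hw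
      have h3 : SameTypeIn G T (P.sets i₀) (P.sets P.len) u w :=
        sameTypeIn_symm hwS (P.pclosed_sets le_rfl) hwtype
      exact sameTypeIn_trans hw₀S hw₀type h3
  -- identification of the target set with A P.len
  have hseteq : {w | T.parent w = v ∧ w ≠ v ∧ w ∈ P.result ∧ P.EndTypeEq w u} = A P.len := by
    ext w
    simp only [Set.mem_setOf_eq]
    constructor
    · rintro ⟨h1, h2, h3, h4⟩
      refine (hmemA _ w).mpr ⟨h3, h1, h2, ?_⟩
      have := h4
      unfold PruningProcess.EndTypeEq PruningProcess.currentSet at this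
      rwa [P.lastIdx_eq_len_of_mem_result h3, ← hi₀] at this
    · intro hw
      obtain ⟨hwS, hwpar, hwv, hwtype⟩ := (hmemA _ w).mp hw
      refine ⟨hwpar, hwv, hwS, ?_⟩
      unfold PruningProcess.EndTypeEq PruningProcess.currentSet
      rw [P.lastIdx_eq_len_of_mem_result hwS, ← hi₀]
      exact hwtype
  rw [hseteq]
  omega
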